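/- arXiv:1811.11165 — 4 statements merged into one kernel-verified Lean document; each statement's English description precedes it below -/
import Mathlib

section
/- Let c ≥ 1 and let X be a type. Let T : Fin c → PMF (Fin c) be a label-noise transition kernel, and suppose the c × c real matrix M defined by M i j = ((T i) j : ℝ) is invertible (nonsingular). Define the corruption of a joint distribution p : PMF (X × Fin c) by corrupt p = p.bind (fun z => (T z.2).map (fun j => (z.1, j))), i.e., the clean label is replaced by a noisy label drawn from T independently of the data coordinate. Then for any two joint distributions p q : PMF (X × Fin c), corrupt p = corrupt q if and only if p = q. (This is Theorem 2 of the paper: the generator is optimal, i.e., the noisy-label joint generative distribution equals the noisy-label joint real distribution, if and only if the clean-label joint distributions agree.) -/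
open scoped ENNReal

lemma corrupt_apply {c : ℕ} {X : Type*} (T : Fin c → PMF (Fin c))
    (r : PMF (X × Fin c)) (x : X) (j : Fin c) :
    (r.bind fun z => (T z.2).map (fun j => (z.1, j))) (x, j)
      = ∑' i : Fin c, r (x, i) * T i j := by
  classical
  simp only [PMF.bind_apply, PMF.map_apply, Prod.mk.injEq]
  rw [ENNReal.tsum_prod']
  have h1 : ∀ (a : X) (b : Fin c),
      (∑' k : Fin c, if x = (a, b).1 ∧ j = k then T (a, b).2 k else 0)
        = if x = a then T b j else 0 := by
    intro a b
    rw [tsum_eq_single j (by intro k hk; simp [Ne.symm hk])]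
    by_cases hxa : x = a <;> simp [hxa]
  simp only [h1]
  have h2 : ∀ a : X,
      (∑' b : Fin c, r (a, b) * if x = a then T b j else 0)
        = if x = a then ∑' b : Fin c, r (x, b) * T b j else 0 := by
    intro a
    by_cases hxa : x = a
    · subst hxa; simp
    · simp [hxa]
  simp only [h2]
  rw [tsum_eq_single x (by intro a ha; simp [Ne.symm ha])]
  simp

/-- Theorem 2 of the paper (PMF form): if the label-noise transition matrix is
invertible, then corruption of joint distributions is injective, i.e., the noisy
joint generative distribution equals the noisy joint real distribution iff the
clean joint distributions agree. -/
theorem corrupt_eq_iff_of_invertible {c : ℕ} (hc : 1 ≤ c) (X : Type*)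
    (T : Fin c → PMF (Fin c))
    (hT : Invertible (Matrix.of fun i j => ((T i) j).toReal))
    (p q : PMF (X × Fin c)) :
    p.bind (fun z => (T z.2).map (fun j => (z.1, j))) =
      q.bind (fun z => (T z.2).map (fun j => (z.1, j))) ↔ p = q := by
  constructor
  · intro h
    set M : Matrix (Fin c) (Fin c) ℝ := Matrix.of fun i j => ((T i) j).toReal with hM
    ext ⟨x, i⟩
    -- vectors of real values
    set vp : Fin c → ℝ := fun i => (p (x, i)).toReal with hvp
    set vq : Fin c → ℝ := fun i => (q (x, i)).toReal with hvq
    have hvm : Matrix.vecMul vp M = Matrix.vecMul vq M := by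
      funext j
      have hj : (p.bind fun z => (T z.2).map (fun j => (z.1, j))) (x, j)
          = (q.bind fun z => (T z.2).map (fun j => (z.1, j))) (x, j) := by rw [h]
      rw [corrupt_apply, corrupt_apply] at hj
      have hfin : ∀ (r : PMF (X × Fin c)) (i : Fin c), r (x, i) * T i j ≠ ⊤ :=
        fun r i => ENNReal.mul_ne_top (PMF.apply_ne_top r _) (PMF.apply_ne_top _ _)
      have := congrArg ENNReal.toReal hj
      rw [tsum_fintype, tsum_fintype, ENNReal.toReal_sum (fun i _ => hfin p i),
        ENNReal.toReal_sum (fun i _ => hfin q i)] at this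
      simpa [Matrix.vecMul, dotProduct, hM, ENNReal.toReal_mul] using this
    have hvpq : vp = vq := by
      have h1 : Matrix.vecMul (Matrix.vecMul vp M) (⅟M)
          = Matrix.vecMul (Matrix.vecMul vq M) (⅟M) := by rw [hvm]
      rwa [Matrix.vecMul_vecMul, Matrix.vecMul_vecMul, mul_invOf_self,
        Matrix.vecMul_one, Matrix.vecMul_one] at h1
    have := congrFun hvpq i
    exact (ENNReal.toReal_eq_toReal_iff' (PMF.apply_ne_top p _) (PMF.apply_ne_top q _)).mp this
  · intro h; rw [h]
end

section
/- Let X be a measurable space, let c ≥ 1, and let T : Fin c → Fin c → ℝ≥0 be such that the real matrix (fun i j => (T i j : ℝ)) is invertible. Let μ ν : Fin c → Measure X be two families of finite measures. If for every j : Fin c the mixed measures agree, i.e., ∑ i, (T i j) • μ i = ∑ i, (T i j) • ν i (sum over Fin c of scaled measures), then μ i = ν i for every i. (This is the measure-theoretic core of Theorem 2: the clean class-conditional joint measures p̂(x, ŷ = i) are uniquely determined by the noisy class-conditional joint measures p̃(x, ỹ = j) = ∑_i T_{i,j} p̂(x, ŷ = i) when the transition matrix T is nonsingular.) -/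
open MeasureTheory
open scoped NNReal

/-- Measure-theoretic core of Theorem 2: if the noise transition matrix is
invertible, then the clean class-conditional joint measures are uniquely
determined by the noisy mixtures. -/
theorem clean_measures_eq_of_noisy_measures_eq {X : Type*} [MeasurableSpace X]
    {c : ℕ} (hc : 1 ≤ c) (T : Fin c → Fin c → ℝ≥0)
    (hT : Invertible (Matrix.of fun i j => (T i j : ℝ)))
    (μ ν : Fin c → Measure X)
    (hμ : ∀ i, IsFiniteMeasure (μ i)) (hν : ∀ i, IsFiniteMeasure (ν i))
    (h : ∀ j, ∑ i, (T i j) • μ i = ∑ i, (T i j) • ν i) :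
    ∀ i, μ i = ν i := by
  intro i
  ext s hs
  set M : Matrix (Fin c) (Fin c) ℝ := Matrix.of fun i j => (T i j : ℝ)
  have key : ∀ j, ∑ k, (T k j : ℝ) * ((μ k) s).toReal
      = ∑ k, (T k j : ℝ) * ((ν k) s).toReal := by
    intro j
    have := congrArg (fun m : Measure X => ((m s).toReal)) (h j)
    simp only [Measure.coe_finset_sum, Finset.sum_apply, Measure.smul_apply,
      smul_eq_mul] at this
    rw [ENNReal.toReal_sum, ENNReal.toReal_sum] at this
    · simpa [ENNReal.toReal_mul] using this
    · intro k _
      exact ENNReal.mul_ne_top (by simp) (measure_ne_top (ν k) s)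
    · intro k _
      exact ENNReal.mul_ne_top (by simp) (measure_ne_top (μ k) s)
  have hvec : Matrix.vecMul (fun k => ((μ k) s).toReal) M = Matrix.vecMul (fun k => ((ν k) s).toReal) M := by
    funext j
    simpa [Matrix.vecMul, dotProduct, M, mul_comm] using key j
  have hfun : (fun k => ((μ k) s).toReal) = (fun k => ((ν k) s).toReal) := by
    have := congrArg (fun v => Matrix.vecMul v (⅟M)) hvec
    simpa [Matrix.vecMul_vecMul] using this
  have : ((μ i) s).toReal = ((ν i) s).toReal := congrFun hfun i
  exact (ENNReal.toReal_eq_toReal_iff' (measure_ne_top _ _) (measure_ne_top _ _)).mp this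
end

section
/- Let c ≥ 1 and let T : Fin c → Fin c → ℝ satisfy: T i j ≥ 0 for all i j, ∑ j, T i j = 1 for each i (row-stochastic), and the matrix T is invertible. Let p q : Fin c → ℝ be probability vectors (all entries nonnegative, summing to 1), and write (Tᵀp)_j = ∑ i, T i j * p i and (Tᵀq)_j = ∑ i, T i j * q i; assume (Tᵀp)_j > 0 and (Tᵀq)_j > 0 for all j. Then the forward-corrected cross-entropy satisfies ∑ j, (Tᵀp)_j * (-Real.log (Tᵀq)_j) ≥ ∑ j, (Tᵀp)_j * (-Real.log (Tᵀp)_j), with equality if and only if q = p. (This is the pointwise content of Theorem 1: at each data point, the unique minimizer of the forward-corrected cross-entropy loss under the noisy label distribution is the clean conditional label distribution.) -/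
lemma gibbs_aux {c : ℕ} (a b : Fin c → ℝ) (ha : ∀ j, 0 < a j) (hb : ∀ j, 0 < b j)
    (has : ∑ j, a j = 1) (hbs : ∑ j, b j = 1) :
    (∑ j, a j * (-Real.log (b j)) ≥ ∑ j, a j * (-Real.log (a j))) ∧
      ((∑ j, a j * (-Real.log (b j)) = ∑ j, a j * (-Real.log (a j))) ↔ b = a) := by
  set f : Fin c → ℝ := fun j => a j * (Real.log (a j) - Real.log (b j)) - a j + b j with hf
  have h2 : ∀ j, a j * (b j / a j - 1) = b j - a j := by
    intro j
    rw [mul_sub, mul_div_cancel₀ _ (ha j).ne', mul_one]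
  have hfnn : ∀ j ∈ Finset.univ, 0 ≤ f j := by
    intro j _
    have hlog : Real.log (b j / a j) ≤ b j / a j - 1 :=
      Real.log_le_sub_one_of_pos (div_pos (hb j) (ha j))
    have h1 := mul_le_mul_of_nonneg_left hlog (ha j).le
    rw [Real.log_div (hb j).ne' (ha j).ne'] at h1
    simp only [hf]
    nlinarith [h1, h2 j]
  have hsum : ∑ j, a j * (-Real.log (b j)) - ∑ j, a j * (-Real.log (a j)) = ∑ j, f j := by
    rw [← Finset.sum_sub_distrib]
    have h1 : ∀ j, a j * (-Real.log (b j)) - a j * (-Real.log (a j)) = f j + (a j - b j) := by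
      intro j; simp only [hf]; ring
    simp_rw [h1]
    rw [Finset.sum_add_distrib, Finset.sum_sub_distrib, has, hbs]
    ring
  have hge : ∑ j, a j * (-Real.log (b j)) ≥ ∑ j, a j * (-Real.log (a j)) := by
    have := Finset.sum_nonneg hfnn
    linarith [hsum]
  refine ⟨hge, ?_, ?_⟩
  · intro heq
    have hzero : ∑ j, f j = 0 := by linarith [hsum]
    have hall := (Finset.sum_eq_zero_iff_of_nonneg hfnn).1 hzero
    funext j
    by_contra hne
    have hratio : b j / a j ≠ 1 := by
      intro h
      exact hne ((div_eq_one_iff_eq (ha j).ne').1 h)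
    have hlt : Real.log (b j / a j) < b j / a j - 1 :=
      Real.log_lt_sub_one_of_pos (div_pos (hb j) (ha j)) hratio
    have h1 := mul_lt_mul_of_pos_left hlt (ha j)
    rw [Real.log_div (hb j).ne' (ha j).ne'] at h1
    have hfj := hall j (Finset.mem_univ j)
    simp only [hf] at hfj
    nlinarith [h1, h2 j, hfj]
  · intro h; rw [h]

/-- Pointwise content of Theorem 1: with a row-stochastic invertible transition
matrix `T`, the forward-corrected cross-entropy of a candidate distribution `q`
against the noisy distribution `Tᵀp` is minimized exactly at `q = p`. -/
theorem forward_corrected_cross_entropy_min {c : ℕ} (hc : 1 ≤ c)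
    (T : Fin c → Fin c → ℝ)
    (hTnn : ∀ i j, 0 ≤ T i j) (hTrow : ∀ i, ∑ j, T i j = 1)
    (hTinv : Invertible (Matrix.of T))
    (p q : Fin c → ℝ)
    (hp : ∀ i, 0 ≤ p i) (hps : ∑ i, p i = 1)
    (hq : ∀ i, 0 ≤ q i) (hqs : ∑ i, q i = 1)
    (hTp : ∀ j, 0 < ∑ i, T i j * p i) (hTq : ∀ j, 0 < ∑ i, T i j * q i) :
    (∑ j, (∑ i, T i j * p i) * (-Real.log (∑ i, T i j * q i)) ≥
        ∑ j, (∑ i, T i j * p i) * (-Real.log (∑ i, T i j * p i))) ∧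
      ((∑ j, (∑ i, T i j * p i) * (-Real.log (∑ i, T i j * q i)) =
          ∑ j, (∑ i, T i j * p i) * (-Real.log (∑ i, T i j * p i))) ↔ q = p) := by
  set a : Fin c → ℝ := fun j => ∑ i, T i j * p i with haa
  set b : Fin c → ℝ := fun j => ∑ i, T i j * q i with hbb
  have has : ∑ j, a j = 1 := by
    rw [haa, Finset.sum_comm]
    simp_rw [← Finset.sum_mul, fun i => hTrow i]
    simpa using hps
  have hbs : ∑ j, b j = 1 := by
    rw [hbb, Finset.sum_comm]
    simp_rw [← Finset.sum_mul, fun i => hTrow i]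
    simpa using hqs
  obtain ⟨hge, hiff⟩ := gibbs_aux a b hTp hTq has hbs
  refine ⟨hge, hiff.trans ?_⟩
  have key : ∀ v : Fin c → ℝ,
      (Matrix.transpose (Matrix.of T)).mulVec v = fun j => ∑ i, T i j * v i := by
    intro v; funext j
    simp [Matrix.mulVec, dotProduct, Matrix.transpose]
  constructor
  · intro hba
    have hinj : Function.Injective ((Matrix.transpose (Matrix.of T)).mulVec) := by
      haveI : Invertible (Matrix.transpose (Matrix.of T)) := (Matrix.transposeInvertibleEquivInvertible (Matrix.of T)).symm hTinv
      exact Matrix.mulVec_injective_of_invertible _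
    apply hinj
    rw [key, key]
    exact hba
  · intro h; rw [hbb, haa, h]
end

section
/- Let c ≥ 1 and let T : Fin c → Fin c → ℝ satisfy: T i j ≥ 0 for all i j, ∑ j, T i j = 1 for each i (row-stochastic), and the matrix T is invertible. Let X be a finite type and w : X → ℝ with w x ≥ 0 for all x (a weighting of data points). Let P : X → Fin c → ℝ assign to each x a probability vector (entries nonnegative, summing to 1) with (Tᵀ(P x))_j = ∑ i, T i j * P x i > 0 for all j. Then for every Q : X → Fin c → ℝ such that each Q x is a probability vector with (Tᵀ(Q x))_j > 0 for all j, one has ∑ x, w x * ∑ j, (Tᵀ(P x))_j * (-Real.log (Tᵀ(Q x))_j) ≥ ∑ x, w x * ∑ j, (Tᵀ(P x))_j * (-Real.log (Tᵀ(P x))_j); moreover, equality holds if and only if Q x = P x for every x with w x > 0. (This is Theorem 1 of the paper in the finite-data-space setting: minimizing the forward-corrected cross-entropy loss over the noisy labeled distribution recovers, on the support of the data distribution, exactly the clean conditional label distribution.) -/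
/-- Gibbs' inequality with equality condition, for positive probability vectors. -/
lemma gibbs_aux_s5 {n : ℕ} (p q : Fin n → ℝ) (hp : ∀ j, 0 < p j) (hq : ∀ j, 0 < q j)
    (hps : ∑ j, p j = 1) (hqs : ∑ j, q j = 1) :
    (∑ j, p j * (-Real.log (p j)) ≤ ∑ j, p j * (-Real.log (q j))) ∧
    ((∑ j, p j * (-Real.log (q j)) = ∑ j, p j * (-Real.log (p j))) ↔ q = p) := by
  have key : ∀ j : Fin n,
      p j * (-Real.log (p j)) - p j * (-Real.log (q j)) ≤ q j - p j := by
    intro j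
    have hlog := Real.log_le_sub_one_of_pos (div_pos (hq j) (hp j))
    rw [Real.log_div (hq j).ne' (hp j).ne'] at hlog
    have h2 : p j * (Real.log (q j) - Real.log (p j)) ≤ p j * (q j / p j - 1) :=
      mul_le_mul_of_nonneg_left hlog (hp j).le
    have h3 : p j * (q j / p j - 1) = q j - p j := by
      rw [mul_sub, mul_one, ← mul_div_assoc, mul_comm, mul_div_assoc, div_self (hp j).ne', mul_one]
    have h4 : p j * (-Real.log (p j)) - p j * (-Real.log (q j))
        = p j * (Real.log (q j) - Real.log (p j)) := by ring
    rw [h4]; linarith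
  have keystrict : ∀ j : Fin n, q j ≠ p j →
      p j * (-Real.log (p j)) - p j * (-Real.log (q j)) < q j - p j := by
    intro j hne
    have hone : q j / p j ≠ 1 := by
      rw [ne_eq, div_eq_one_iff_eq (hp j).ne']
      exact hne
    have hlog := Real.log_lt_sub_one_of_pos (div_pos (hq j) (hp j)) hone
    rw [Real.log_div (hq j).ne' (hp j).ne'] at hlog
    have h2 : p j * (Real.log (q j) - Real.log (p j)) < p j * (q j / p j - 1) :=
      (mul_lt_mul_iff_right₀ (hp j)).2 hlog
    have h3 : p j * (q j / p j - 1) = q j - p j := by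
      rw [mul_sub, mul_one, ← mul_div_assoc, mul_comm, mul_div_assoc, div_self (hp j).ne', mul_one]
    have h4 : p j * (-Real.log (p j)) - p j * (-Real.log (q j))
        = p j * (Real.log (q j) - Real.log (p j)) := by ring
    rw [h4]; linarith
  have hsum0 : ∑ j, (q j - p j) = 0 := by
    rw [Finset.sum_sub_distrib, hps, hqs]; ring
  have hsumle : ∑ j, (p j * (-Real.log (p j)) - p j * (-Real.log (q j))) ≤ 0 := by
    calc ∑ j, (p j * (-Real.log (p j)) - p j * (-Real.log (q j)))
        ≤ ∑ j, (q j - p j) := Finset.sum_le_sum fun j _ => key j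
      _ = 0 := hsum0
  rw [Finset.sum_sub_distrib] at hsumle
  constructor
  · linarith
  constructor
  · intro heq
    by_contra hne
    obtain ⟨j0, hj0⟩ := Function.ne_iff.mp hne
    have hstrict : ∑ j, (p j * (-Real.log (p j)) - p j * (-Real.log (q j)))
        < ∑ j, (q j - p j) :=
      Finset.sum_lt_sum (fun j _ => key j) ⟨j0, Finset.mem_univ j0, keystrict j0 hj0⟩
    rw [Finset.sum_sub_distrib, hsum0] at hstrict
    linarith
  · rintro rfl; rfl

/-- Right multiplication by an invertible matrix is injective. -/
lemma vecMul_inj_aux {n : ℕ} (M : Matrix (Fin n) (Fin n) ℝ) [Invertible M]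
    {u v : Fin n → ℝ} (h : Matrix.vecMul u M = Matrix.vecMul v M) : u = v :=
  Matrix.vecMul_injective_of_invertible M h

/-- Theorem 1 of the paper (finite data space): minimizing the expected
forward-corrected cross-entropy over the noisy labeled distribution recovers,
on the support of the data distribution, exactly the clean conditional label
distribution. -/
theorem forward_corrected_loss_min {c : ℕ} (hc : 1 ≤ c)
    (T : Fin c → Fin c → ℝ)
    (hTnn : ∀ i j, 0 ≤ T i j) (hTrow : ∀ i, ∑ j, T i j = 1)
    (hTinv : Invertible (Matrix.of T))
    (X : Type*) [Fintype X] (w : X → ℝ) (hw : ∀ x, 0 ≤ w x)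
    (P : X → Fin c → ℝ)
    (hP : ∀ x i, 0 ≤ P x i) (hPs : ∀ x, ∑ i, P x i = 1)
    (hTP : ∀ x j, 0 < ∑ i, T i j * P x i)
    (Q : X → Fin c → ℝ)
    (hQ : ∀ x i, 0 ≤ Q x i) (hQs : ∀ x, ∑ i, Q x i = 1)
    (hTQ : ∀ x j, 0 < ∑ i, T i j * Q x i) :
    (∑ x, w x * ∑ j, (∑ i, T i j * P x i) * (-Real.log (∑ i, T i j * Q x i)) ≥
        ∑ x, w x * ∑ j, (∑ i, T i j * P x i) * (-Real.log (∑ i, T i j * P x i))) ∧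
      ((∑ x, w x * ∑ j, (∑ i, T i j * P x i) * (-Real.log (∑ i, T i j * Q x i)) =
          ∑ x, w x * ∑ j, (∑ i, T i j * P x i) * (-Real.log (∑ i, T i j * P x i))) ↔
        ∀ x, 0 < w x → Q x = P x) := by
  letI := hTinv
  -- sums of the pushed-forward vectors are 1
  have hsum1 : ∀ (R : X → Fin c → ℝ), (∀ x, ∑ i, R x i = 1) →
      ∀ x, ∑ j, ∑ i, T i j * R x i = 1 := by
    intro R hRs x
    rw [Finset.sum_comm]
    simp_rw [← Finset.sum_mul, hTrow, one_mul]
    exact hRs x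
  -- apply Gibbs pointwise
  have hgibbs : ∀ x,
      (∑ j, (∑ i, T i j * P x i) * (-Real.log (∑ i, T i j * P x i)) ≤
        ∑ j, (∑ i, T i j * P x i) * (-Real.log (∑ i, T i j * Q x i))) ∧
      ((∑ j, (∑ i, T i j * P x i) * (-Real.log (∑ i, T i j * Q x i)) =
        ∑ j, (∑ i, T i j * P x i) * (-Real.log (∑ i, T i j * P x i))) ↔
        (fun j => ∑ i, T i j * Q x i) = fun j => ∑ i, T i j * P x i) := by
    intro x
    exact gibbs_aux_s5 (fun j => ∑ i, T i j * P x i) (fun j => ∑ i, T i j * Q x i)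
      (hTP x) (hTQ x) (hsum1 P hPs x) (hsum1 Q hQs x)
  -- translate the equality of pushed-forward vectors into equality of Q x and P x
  have hiff : ∀ x, ((fun j => ∑ i, T i j * Q x i) = fun j => ∑ i, T i j * P x i) ↔
      Q x = P x := by
    intro x
    constructor
    · intro h
      apply vecMul_inj_aux (Matrix.of T)
      funext j
      have hj := congrFun h j
      simp only [Matrix.vecMul, dotProduct, Matrix.of_apply]
      calc ∑ i, Q x i * T i j = ∑ i, T i j * Q x i := by
            exact Finset.sum_congr rfl fun i _ => mul_comm _ _
        _ = ∑ i, T i j * P x i := hj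
        _ = ∑ i, P x i * T i j := Finset.sum_congr rfl fun i _ => mul_comm _ _
    · intro h; rw [h]
  -- termwise inequality
  have hterm : ∀ x ∈ (Finset.univ : Finset X),
      w x * ∑ j, (∑ i, T i j * P x i) * (-Real.log (∑ i, T i j * P x i)) ≤
      w x * ∑ j, (∑ i, T i j * P x i) * (-Real.log (∑ i, T i j * Q x i)) :=
    fun x _ => mul_le_mul_of_nonneg_left (hgibbs x).1 (hw x)
  constructor
  · exact Finset.sum_le_sum hterm
  constructor
  · intro heq x hwx
    have hall := (Finset.sum_eq_sum_iff_of_le hterm).1 heq.symm x (Finset.mem_univ x)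
    have hfg : ∑ j, (∑ i, T i j * P x i) * (-Real.log (∑ i, T i j * Q x i)) =
        ∑ j, (∑ i, T i j * P x i) * (-Real.log (∑ i, T i j * P x i)) :=
      (mul_left_cancel₀ hwx.ne' hall).symm
    exact (hiff x).1 ((hgibbs x).2.1 hfg)
  · intro h
    apply Finset.sum_congr rfl
    intro x _
    rcases eq_or_lt_of_le (hw x) with hwx | hwx
    · rw [← hwx]; ring
    · rw [h x hwx]
end
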